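/- Let V be a closed subset of ℝ^n containing 0, H a hyperplane through 0 with unit normal n_H, and assume the paratingent cone C^+(0,V) is contained in H. Then there exists r > 0 such that for every x ∈ H, the set V ∩ B(0,r) ∩ (x + ℝ·n_H) contains at most one point. -/

import Mathlib

open Filter

/-- The paratingent cone of `V` at `x`. -/
def paratingentCone {E : Type*} [NormedAddCommGroup E] [NormedSpace ℝ E]
    (V : Set E) (x : E) : Set E :=
  {v | ∃ (xs ys : ℕ → E) (c : ℕ → ℝ),
    (∀ n, xs n ∈ V) ∧ (∀ n, ys n ∈ V) ∧
    Tendsto xs atTop (nhds x) ∧ Tendsto ys atTop (nhds x) ∧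
    Tendsto c atTop atTop ∧
    Tendsto (fun n => c n • (xs n - ys n)) atTop (nhds v)}

theorem stmt10 {n : ℕ} (V : Set (EuclideanSpace ℝ (Fin n))) (hV : IsClosed V)
    (h0 : (0 : EuclideanSpace ℝ (Fin n)) ∈ V)
    (nH : EuclideanSpace ℝ (Fin n)) (hnH : ‖nH‖ = 1)
    (hcone : paratingentCone V 0 ⊆ {y | inner ℝ nH y = (0 : ℝ)}) :
    ∃ r > (0 : ℝ), ∀ x : EuclideanSpace ℝ (Fin n), inner ℝ nH x = (0 : ℝ) →
      Set.Subsingleton (V ∩ Metric.ball 0 r ∩ {y | ∃ t : ℝ, y = x + t • nH}) := by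
  by_contra hcon
  push_neg at hcon
  have key : ∀ k : ℕ, ∃ a b : EuclideanSpace ℝ (Fin n),
      a ∈ V ∧ b ∈ V ∧ ‖a‖ < 1/(k+1) ∧ ‖b‖ < 1/(k+1) ∧
      (0 : ℝ) < inner ℝ nH (a - b) ∧ a - b = (inner ℝ nH (a - b) : ℝ) • nH := by
    intro k
    obtain ⟨x, hx, hns⟩ := hcon (1/(k+1)) (by positivity)
    obtain ⟨a, ha, b, hb, hab⟩ := hns
    obtain ⟨⟨haV, haB⟩, s, hsa⟩ := ha
    obtain ⟨⟨hbV, hbB⟩, u, hub⟩ := hb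
    rw [mem_ball_zero_iff] at haB hbB
    have hdiff : a - b = (s - u) • nH := by
      rw [hsa, hub]; module
    have hinner : (inner ℝ nH (a - b) : ℝ) = s - u := by
      rw [hdiff, real_inner_smul_right, real_inner_self_eq_norm_sq, hnH]
      ring
    have hsu : s ≠ u := by
      intro h
      exact hab (by rw [hsa, hub, h])
    rcases lt_or_gt_of_ne hsu with h | h
    · refine ⟨b, a, hbV, haV, hbB, haB, ?_, ?_⟩
      · have : (inner ℝ nH (b - a) : ℝ) = u - s := by
          rw [show b - a = (u - s) • nH by rw [hsa, hub]; module,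
            real_inner_smul_right, real_inner_self_eq_norm_sq, hnH]; ring
        rw [this]; linarith
      · rw [show (inner ℝ nH (b - a) : ℝ) = u - s by
          rw [show b - a = (u - s) • nH by rw [hsa, hub]; module,
            real_inner_smul_right, real_inner_self_eq_norm_sq, hnH]; ring,
          hsa, hub]; module
    · exact ⟨a, b, haV, hbV, haB, hbB, by rw [hinner]; linarith,
        by rw [hinner, hdiff]⟩
  choose a b haV hbV haB hbB hpos heq using key
  set c : ℕ → ℝ := fun k => (inner ℝ nH (a k - b k) : ℝ)⁻¹ with hc
  have ha0 : Tendsto a atTop (nhds 0) := by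
    apply squeeze_zero_norm (fun k => (haB k).le)
    exact tendsto_one_div_add_atTop_nhds_zero_nat
  have hb0 : Tendsto b atTop (nhds 0) := by
    apply squeeze_zero_norm (fun k => (hbB k).le)
    exact tendsto_one_div_add_atTop_nhds_zero_nat
  have hcT : Tendsto c atTop atTop := by
    have hdiv : Tendsto (fun k : ℕ => ((k:ℝ)+1)/2) atTop atTop := by
      apply Filter.Tendsto.atTop_div_const (by norm_num)
      exact tendsto_atTop_add_const_right atTop 1 tendsto_natCast_atTop_atTop
    refine tendsto_atTop_mono ?_ hdiv
    intro k
    have h1 : (inner ℝ nH (a k - b k) : ℝ) ≤ 2/(k+1) := by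
      calc (inner ℝ nH (a k - b k) : ℝ) ≤ ‖nH‖ * ‖a k - b k‖ := real_inner_le_norm _ _
        _ = ‖a k - b k‖ := by rw [hnH, one_mul]
        _ ≤ ‖a k‖ + ‖b k‖ := norm_sub_le _ _
        _ ≤ 2/(k+1) := by
            have hk : (0:ℝ) < (k:ℝ) + 1 := by positivity
            have := (haB k).le
            have := (hbB k).le
            rw [show (2:ℝ)/((k:ℝ)+1) = 1/((k:ℝ)+1) + 1/((k:ℝ)+1) by ring]
            linarith
    have hk1 : (0:ℝ) < (k:ℝ) + 1 := by positivity
    have h2 : ((k:ℝ)+1)/2 = (2/((k:ℝ)+1))⁻¹ := by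
      field_simp
    rw [h2]
    exact inv_anti₀ (hpos k) h1
  have hlim : Tendsto (fun k => c k • (a k - b k)) atTop (nhds nH) := by
    have : (fun k => c k • (a k - b k)) = fun _ => nH := by
      funext k
      rw [hc]
      conv_lhs => rw [heq k]
      rw [smul_smul, inv_mul_cancel₀ (hpos k).ne', one_smul]
    rw [this]
    exact tendsto_const_nhds
  have hmem : nH ∈ paratingentCone V 0 :=
    ⟨a, b, c, haV, hbV, ha0, hb0, hcT, hlim⟩
  have := hcone hmem
  simp only [Set.mem_setOf_eq, real_inner_self_eq_norm_sq, hnH] at this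
  norm_num at this
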